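/- Let G be a connected finite simple graph of order n ≥ 2. Then every vertex of G is contained in some fort of G of cardinality two if and only if Z*(G) = n/2. -/

import Mathlib

open Finset

/-- A fort of a graph: a nonempty (finite) set of vertices `F` such that no vertex
outside `F` has exactly one neighbor in `F`. -/
def IsFort {V : Type*} (G : SimpleGraph V) (F : Finset V) : Prop :=
  F.Nonempty ∧ ∀ v ∉ F, ¬ ∃! u, u ∈ F ∧ G.Adj v u

/-- The fort number: the maximum cardinality of a collection of pairwise disjoint forts. -/
noncomputable def fortNumber {V : Type*} (G : SimpleGraph V) : ℕ :=
  sSup {k | ∃ 𝒞 : Finset (Finset V), (∀ F ∈ 𝒞, IsFort G F) ∧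
    (↑𝒞 : Set (Finset V)).Pairwise Disjoint ∧ 𝒞.card = k}

/-- The fractional zero forcing number. -/
noncomputable def fracZ {V : Type*} [Fintype V] (G : SimpleGraph V) : ℝ :=
  sInf {x : ℝ | ∃ ω : V → ℝ, (∀ v, 0 ≤ ω v) ∧
    (∀ F : Finset V, IsFort G F → 1 ≤ ∑ v ∈ F, ω v) ∧ x = ∑ v, ω v}

/-- The set of vertices eventually filled by the zero forcing process started at `S`. -/
inductive ZFForced {V : Type*} (G : SimpleGraph V) (S : Set V) : V → Prop
  | init (v : V) : v ∈ S → ZFForced G S v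
  | force (u w : V) : G.Adj u w → ZFForced G S u →
      (∀ x, G.Adj u x → x ≠ w → ZFForced G S x) → ZFForced G S w

/-- A zero forcing set: starting from `S`, every vertex is eventually filled. -/
def IsZeroForcingSet {V : Type*} (G : SimpleGraph V) (S : Set V) : Prop :=
  ∀ v, ZFForced G S v

/-- The zero forcing number: minimum cardinality of a zero forcing set. -/
noncomputable def zfNumber {V : Type*} (G : SimpleGraph V) : ℕ :=
  sInf {k | ∃ S : Finset V, IsZeroForcingSet G ↑S ∧ S.card = k}


lemma pair_fort_char {V : Type*} [DecidableEq V] (G : SimpleGraph V) {a b : V} (hab : a ≠ b) :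
    IsFort G {a, b} ↔ ∀ x, x ≠ a → x ≠ b → (G.Adj x a ↔ G.Adj x b) := by
  constructor
  · rintro ⟨-, h⟩ x hxa hxb
    have hx : x ∉ ({a, b} : Finset V) := by simp [hxa, hxb]
    have hh := h x hx
    by_cases ha : G.Adj x a <;> by_cases hb : G.Adj x b
    · tauto
    · exfalso
      apply hh
      refine ⟨a, ⟨by simp, ha⟩, ?_⟩
      rintro y ⟨hy, hy'⟩
      simp at hy
      rcases hy with rfl | rfl
      · rfl
      · exact absurd hy' hb
    · exfalso
      apply hh
      refine ⟨b, ⟨by simp, hb⟩, ?_⟩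
      rintro y ⟨hy, hy'⟩
      simp at hy
      rcases hy with rfl | rfl
      · exact absurd hy' ha
      · rfl
    · tauto
  · intro h
    refine ⟨⟨a, by simp⟩, ?_⟩
    rintro x hx ⟨u, ⟨hu, hadj⟩, huniq⟩
    simp at hx
    have hiff := h x hx.1 hx.2
    simp at hu
    rcases hu with rfl | rfl
    · have := huniq b ⟨by simp, hiff.mp hadj⟩
      exact hab this.symm
    · have := huniq a ⟨by simp, hiff.mpr hadj⟩
      exact hab this

lemma fort_trans {V : Type*} [DecidableEq V] (G : SimpleGraph V) {a b c : V}
    (hab : a ≠ b) (hac : a ≠ c) (hbc : b ≠ c)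
    (h1 : IsFort G {a, b}) (h2 : IsFort G {b, c}) : IsFort G {a, c} := by
  rw [pair_fort_char G hab] at h1
  rw [pair_fort_char G hbc] at h2
  rw [pair_fort_char G hac]
  intro x hxa hxc
  by_cases hxb : x = b
  · rw [hxb]
    have e1 : G.Adj c a ↔ G.Adj c b := h1 c hac.symm hbc.symm
    have e2 : G.Adj a b ↔ G.Adj a c := h2 a hab hac
    rw [G.adj_comm b a, e2, G.adj_comm a c, e1, G.adj_comm c b]
  · exact (h1 x hxa hxb).trans (h2 x hxb hxc)

lemma fort_card_two_le {V : Type*} [Fintype V] (G : SimpleGraph V)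
    (hconn : G.Connected) (hn : 2 ≤ Fintype.card V) {F : Finset V} (hF : IsFort G F) :
    2 ≤ F.card := by
  obtain ⟨⟨v, hv⟩, h⟩ := hF
  by_contra hlt
  push_neg at hlt
  have hcard : F.card = 1 := le_antisymm (by omega) (Finset.card_pos.mpr ⟨v, hv⟩)
  obtain ⟨w, hw⟩ := Finset.card_eq_one.mp hcard
  subst hw
  simp at hv; subst hv
  -- v is isolated
  have hiso : ∀ x, ¬ G.Adj x v := by
    intro x hadj
    have hxv : x ≠ v := G.ne_of_adj hadj
    apply h x (by simp [hxv])
    exact ⟨v, ⟨by simp, hadj⟩, by rintro y ⟨hy, -⟩; simpa using hy⟩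
  obtain ⟨u, hu⟩ := Fintype.exists_ne_of_one_lt_card (by omega) v
  obtain ⟨p⟩ := hconn v u
  have hnil : ¬ p.Nil := SimpleGraph.Walk.not_nil_of_ne hu.symm
  exact hiso _ (SimpleGraph.Walk.adj_snd hnil).symm

def frel {V : Type*} [DecidableEq V] (G : SimpleGraph V) (v u : V) : Prop :=
  u = v ∨ (u ≠ v ∧ IsFort G {u, v})

lemma frel_refl {V : Type*} [DecidableEq V] (G : SimpleGraph V) (v : V) : frel G v v :=
  Or.inl rfl

lemma frel_symm {V : Type*} [DecidableEq V] {G : SimpleGraph V} {v u : V}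
    (h : frel G v u) : frel G u v := by
  rcases h with rfl | ⟨hne, h⟩
  · exact Or.inl rfl
  · exact Or.inr ⟨hne.symm, Finset.pair_comm u v ▸ h⟩

lemma frel_trans {V : Type*} [DecidableEq V] {G : SimpleGraph V} {v u w : V}
    (h1 : frel G v u) (h2 : frel G u w) : frel G v w := by
  rcases h1 with rfl | ⟨huv, h1⟩
  · exact h2
  rcases h2 with rfl | ⟨hwu, h2⟩
  · exact Or.inr ⟨huv, h1⟩
  by_cases hwv : w = v
  · exact Or.inl hwv
  exact Or.inr ⟨hwv, fort_trans G hwu hwv huv h2 h1⟩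

lemma frel_fort {V : Type*} [DecidableEq V] {G : SimpleGraph V} {v u w : V}
    (h1 : frel G v u) (h2 : frel G v w) (hne : u ≠ w) : IsFort G {u, w} := by
  have h3 : frel G u w := frel_trans (frel_symm h1) h2
  rcases h3 with rfl | ⟨-, h3⟩
  · exact absurd rfl hne
  · exact Finset.pair_comm w u ▸ h3

lemma sum_lower {V : Type*} [Fintype V] [DecidableEq V] (G : SimpleGraph V)
    (htwo : ∀ v : V, ∃ w, w ≠ v ∧ IsFort G {w, v})
    (ω : V → ℝ) (hf : ∀ F : Finset V, IsFort G F → 1 ≤ ∑ v ∈ F, ω v) :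
    (Fintype.card V : ℝ) / 2 ≤ ∑ v, ω v := by
  classical
  set C : V → Finset V := fun v => univ.filter (fun u => frel G v u) with hC
  have hmemC : ∀ v u, u ∈ C v ↔ frel G v u := by
    intro v u; simp [hC]
  have hvC : ∀ v, v ∈ C v := fun v => (hmemC v v).mpr (frel_refl G v)
  have hcard2 : ∀ v, 2 ≤ (C v).card := by
    intro v
    obtain ⟨w, hwv, hw⟩ := htwo v
    have : w ∈ C v := (hmemC v w).mpr (Or.inr ⟨hwv, hw⟩)
    exact Finset.one_lt_card.mpr ⟨w, this, v, hvC v, hwv⟩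
  have hCeq : ∀ v u, u ∈ C v → C u = C v := by
    intro v u hu
    rw [hmemC] at hu
    ext w
    rw [hmemC, hmemC]
    exact ⟨fun h => frel_trans hu h, fun h => frel_trans (frel_symm hu) h⟩
  -- Step A: per-class lower bound
  have stepA : ∀ v, ((C v).card : ℝ) / 2 ≤ ∑ u ∈ C v, ω u := by
    intro v
    set S := ∑ u ∈ C v, ω u with hS
    set k := (C v).card with hk
    have hpair : ∀ u ∈ C v, ∀ w ∈ (C v).erase u, (1:ℝ) ≤ ω u + ω w := by
      intro u hu w hw
      have hwu : w ≠ u := (Finset.mem_erase.mp hw).1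
      have hwC : w ∈ C v := (Finset.mem_erase.mp hw).2
      have hfort : IsFort G {u, w} :=
        frel_fort ((hmemC v u).mp hu) ((hmemC v w).mp hwC) hwu.symm
      have := hf _ hfort
      rwa [Finset.sum_pair hwu.symm] at this
    have hdouble : (k : ℝ) * ((k:ℝ) - 1) ≤ 2 * ((k:ℝ) - 1) * S := by
      have hle : ∀ u ∈ C v, ((k:ℝ) - 1) ≤ ∑ w ∈ (C v).erase u, (ω u + ω w) := by
        intro u hu
        calc ((k:ℝ) - 1) = ((C v).erase u).card • (1:ℝ) := by
              rw [Finset.card_erase_of_mem hu, nsmul_eq_mul, mul_one]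
              have : 1 ≤ k := le_trans one_le_two (hcard2 v)
              rw [← hk]
              push_cast [Nat.cast_sub this]
              ring
          _ = ∑ _w ∈ (C v).erase u, (1:ℝ) := (Finset.sum_const _).symm
          _ ≤ _ := Finset.sum_le_sum (hpair u hu)
      calc (k : ℝ) * ((k:ℝ) - 1) = ∑ _u ∈ C v, ((k:ℝ) - 1) := by
            rw [Finset.sum_const, nsmul_eq_mul]
        _ ≤ ∑ u ∈ C v, ∑ w ∈ (C v).erase u, (ω u + ω w) :=
            Finset.sum_le_sum hle
        _ = 2 * ((k:ℝ) - 1) * S := by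
            have : ∀ u ∈ C v, ∑ w ∈ (C v).erase u, (ω u + ω w)
                = ((k:ℝ) - 1) * ω u + (S - ω u) := by
              intro u hu
              rw [Finset.sum_add_distrib, Finset.sum_const,
                Finset.sum_erase_eq_sub hu, Finset.card_erase_of_mem hu, nsmul_eq_mul]
              have h1 : 1 ≤ k := le_trans one_le_two (hcard2 v)
              rw [← hk]
              push_cast [Nat.cast_sub h1]
              ring
            rw [Finset.sum_congr rfl this, Finset.sum_add_distrib,
              Finset.sum_sub_distrib, ← Finset.mul_sum, Finset.sum_const, nsmul_eq_mul]
            ring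
    have hk2 : (2:ℝ) ≤ (k:ℝ) := by exact_mod_cast hcard2 v
    nlinarith [hdouble, hk2]
  -- Step B: rewrite the total sum
  set g : V → ℝ := fun u => ω u / ((C u).card : ℝ) with hg
  have hswap : ∑ v, ∑ u ∈ C v, g u = ∑ u, ((C u).card : ℝ) * g u := by
    calc ∑ v, ∑ u ∈ C v, g u
        = ∑ v, ∑ u, (if frel G v u then g u else 0) := by
          refine Finset.sum_congr rfl fun v _ => ?_
          rw [hC, Finset.sum_filter]
      _ = ∑ u, ∑ v, (if frel G v u then g u else 0) := Finset.sum_comm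
      _ = ∑ u, ∑ v, (if frel G u v then g u else 0) := by
          refine Finset.sum_congr rfl fun u _ => Finset.sum_congr rfl fun v _ => ?_
          congr 1
          exact propext ⟨fun h => frel_symm h, fun h => frel_symm h⟩
      _ = ∑ u, ∑ v ∈ C u, g u := by
          refine Finset.sum_congr rfl fun u _ => ?_
          rw [hC, Finset.sum_filter]
      _ = ∑ u, ((C u).card : ℝ) * g u := by
          refine Finset.sum_congr rfl fun u _ => ?_
          rw [Finset.sum_const, nsmul_eq_mul]
  have hrepr : ∑ v, ω v = ∑ v, (∑ u ∈ C v, ω u) / ((C v).card : ℝ) := by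
    have hcardpos : ∀ u : V, ((C u).card : ℝ) ≠ 0 := by
      intro u
      have := hcard2 u
      positivity
    calc ∑ v, ω v = ∑ u, ((C u).card : ℝ) * g u := by
          refine Finset.sum_congr rfl fun u _ => ?_
          show ω u = ((C u).card : ℝ) * (ω u / ((C u).card : ℝ))
          rw [mul_div_assoc']
          rw [mul_comm, mul_div_assoc, div_self (hcardpos u), mul_one]
      _ = ∑ v, ∑ u ∈ C v, g u := hswap.symm
      _ = ∑ v, (∑ u ∈ C v, ω u) / ((C v).card : ℝ) := by
          refine Finset.sum_congr rfl fun v _ => ?_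
          rw [Finset.sum_div]
          refine Finset.sum_congr rfl fun u hu => ?_
          show ω u / ((C u).card : ℝ) = ω u / ((C v).card : ℝ)
          rw [hCeq v u hu]
  rw [hrepr]
  have : ∀ v : V, (1:ℝ)/2 ≤ (∑ u ∈ C v, ω u) / ((C v).card : ℝ) := by
    intro v
    have hpos : (0:ℝ) < ((C v).card : ℝ) := by
      have := hcard2 v
      positivity
    rw [le_div_iff₀ hpos]
    have hA := stepA v
    linarith
  calc (Fintype.card V : ℝ) / 2 = ∑ _v : V, (1:ℝ)/2 := by
        rw [Finset.sum_const, Finset.card_univ, nsmul_eq_mul]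
        ring
    _ ≤ _ := Finset.sum_le_sum fun v _ => this v

lemma fracZ_set_bddBelow {V : Type*} [Fintype V] (G : SimpleGraph V) :
    BddBelow {x : ℝ | ∃ ω : V → ℝ, (∀ v, 0 ≤ ω v) ∧
      (∀ F : Finset V, IsFort G F → 1 ≤ ∑ v ∈ F, ω v) ∧ x = ∑ v, ω v} := by
  refine ⟨0, ?_⟩
  rintro x ⟨ω, h0, -, rfl⟩
  exact Finset.sum_nonneg fun v _ => h0 v

/-- for a connected graph of order `n ≥ 2`, every vertex lies in a fort of
cardinality two iff `Z*(G) = n/2`. -/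
theorem fracZ_eq_half_order_iff {V : Type*} [Fintype V] (G : SimpleGraph V)
    (hconn : G.Connected) (hn : 2 ≤ Fintype.card V) :
    (∀ v : V, ∃ F : Finset V, IsFort G F ∧ F.card = 2 ∧ v ∈ F) ↔
      fracZ G = (Fintype.card V : ℝ) / 2 := by
  classical
  have hfort2 : ∀ F : Finset V, IsFort G F → 2 ≤ F.card :=
    fun F hF => fort_card_two_le G hconn hn hF
  constructor
  · intro htwo
    have hhalf_mem : ((Fintype.card V : ℝ) / 2) ∈ {x : ℝ | ∃ ω : V → ℝ, (∀ v, 0 ≤ ω v) ∧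
        (∀ F : Finset V, IsFort G F → 1 ≤ ∑ v ∈ F, ω v) ∧ x = ∑ v, ω v} := by
      refine ⟨fun _ => 1/2, fun v => by norm_num, ?_, ?_⟩
      · intro F hF
        have h2 := hfort2 F hF
        rw [Finset.sum_const, nsmul_eq_mul]
        have : (2:ℝ) ≤ (F.card : ℝ) := by exact_mod_cast h2
        linarith
      · rw [Finset.sum_const, Finset.card_univ, nsmul_eq_mul]
        ring
    have htwo' : ∀ v : V, ∃ w, w ≠ v ∧ IsFort G {w, v} := by
      intro v
      obtain ⟨F, hF, hcard, hvF⟩ := htwo v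
      obtain ⟨a, b, hab, rfl⟩ := Finset.card_eq_two.mp hcard
      simp only [Finset.mem_insert, Finset.mem_singleton] at hvF
      rcases hvF with h | h
      · subst h
        exact ⟨b, hab.symm, Finset.pair_comm v b ▸ hF⟩
      · subst h
        exact ⟨a, hab, hF⟩
    refine le_antisymm (csInf_le (fracZ_set_bddBelow G) hhalf_mem) ?_
    refine le_csInf ⟨_, hhalf_mem⟩ ?_
    rintro x ⟨ω, h0, hf, rfl⟩
    exact sum_lower G htwo' ω hf
  · intro heq v
    by_contra hno
    push_neg at hno
    -- weighting: 1/2 everywhere except 0 at v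
    set ω : V → ℝ := fun u => 1/2 - (if u = v then 1/2 else 0) with hω
    have hmem : (∑ u, ω u) ∈ {x : ℝ | ∃ ω : V → ℝ, (∀ v, 0 ≤ ω v) ∧
        (∀ F : Finset V, IsFort G F → 1 ≤ ∑ v ∈ F, ω v) ∧ x = ∑ v, ω v} := by
      refine ⟨ω, ?_, ?_, rfl⟩
      · intro u
        rw [hω]
        by_cases h : u = v <;> simp [h]
      · intro F hF
        have h2 := hfort2 F hF
        have hsum : ∑ u ∈ F, ω u
            = (F.card : ℝ) / 2 - (if v ∈ F then (1:ℝ)/2 else 0) := by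
          rw [hω]
          rw [Finset.sum_sub_distrib, Finset.sum_const, nsmul_eq_mul, Finset.sum_ite_eq' F v
            (fun _ => (1:ℝ)/2)]
          ring_nf
        rw [hsum]
        by_cases hvF : v ∈ F
        · have h3 : 3 ≤ F.card := by
            rcases lt_or_eq_of_le h2 with h | h
            · omega
            · exact absurd hvF (hno F hF h.symm)
          have : (3:ℝ) ≤ (F.card : ℝ) := by exact_mod_cast h3
          simp only [hvF, if_true]
          linarith
        · have : (2:ℝ) ≤ (F.card : ℝ) := by exact_mod_cast h2
          simp only [hvF, if_false]
          linarith
    have hle : fracZ G ≤ ∑ u, ω u := csInf_le (fracZ_set_bddBelow G) hmem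
    have hsumval : ∑ u, ω u = (Fintype.card V : ℝ) / 2 - 1/2 := by
      rw [hω]
      rw [Finset.sum_sub_distrib, Finset.sum_const, Finset.card_univ, nsmul_eq_mul,
        Finset.sum_ite_eq' univ v (fun _ => (1:ℝ)/2)]
      simp
      ring
    rw [heq, hsumval] at hle
    linarith
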